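/- arXiv:1603.06822 — 3 statements merged into one kernel-verified Lean document; each statement's English description precedes it below -/
import Mathlib

section
/- Let L be a matroid, x a non-loop element of L, and B a basis of L \ x. Let C be the unique circuit of L with x ∈ C ⊆ B ∪ {x}. If |C| ≥ 3 and w : E(L) → ℝ≥0 is a weight function, and y is a minimum-weight element of C − {x}, then B − {y} is a basis of L / x and w(B − {y}) ≥ (1/2)·w(B). -/
open Set

namespace MatroidSecretary

variable {α : Type*}

/-- The rank of a set in a matroid: the maximum size of an independent subset. -/
noncomputable def rk (M : Matroid α) (X : Set α) : ℕ :=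
  sSup {n | ∃ I, M.Indep I ∧ I ⊆ X ∧ I.ncard = n}

/-- The local connectivity `⊓_M(X,Y) = r(X) + r(Y) - r(X ∪ Y)` (as an integer). -/
noncomputable def econn (M : Matroid α) (X Y : Set α) : ℤ :=
  (rk M X : ℤ) + rk M Y - rk M (X ∪ Y)

/-- The connectivity function `λ_M(X) = r(X) + r(E \ X) - r(E)` (as an integer). -/
noncomputable def lambda (M : Matroid α) (X : Set α) : ℤ :=
  (rk M X : ℤ) + rk M (M.E \ X) - rk M M.E

/-- Contraction `M / C`, defined by duality: `M / C = (M✶ \ C)✶`. -/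
noncomputable def contract (M : Matroid α) (C : Set α) : Matroid α :=
  Matroid.dual (Matroid.restrict (Matroid.dual M) (M.E \ C))

/-- Deletion `M \ D`, i.e. restriction to the complement. -/
noncomputable def delete (M : Matroid α) (D : Set α) : Matroid α :=
  Matroid.restrict M (M.E \ D)

/-- A circuit: a dependent set all of whose proper subsets are independent. -/
def Circuit (M : Matroid α) (C : Set α) : Prop :=
  M.Dep C ∧ ∀ x ∈ C, M.Indep (C \ {x})

/-- A loop of a matroid. -/
def IsLoop (M : Matroid α) (e : α) : Prop := e ∈ M.E ∧ ¬ M.Indep {e}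

/-- The total weight of a set of elements. -/
noncomputable def wt (w : α → ℝ) (S : Set α) : ℝ := ∑ᶠ e ∈ S, w e

/-- The maximum weight of an independent set of `M`. -/
noncomputable def opt (M : Matroid α) (w : α → ℝ) : ℝ :=
  sSup {t | ∃ I, M.Indep I ∧ wt w I = t}

/-- if `B` is a basis of `L \ x`, `C` is the fundamental circuit of the
non-loop `x` with respect to `B`, `|C| ≥ 3`, and `y` is a minimum-weight element of
`C \ {x}`, then `B \ {y}` is a basis of `L / x` of weight at least `w(B)/2`. -/
theorem basis_of_contract_of_big_circuit (L : Matroid α) [L.Finite] (x : α) (B C : Set α)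
    (hx : x ∈ L.E) (hxnl : L.Indep {x})
    (hB : (delete L {x}).IsBase B)
    (hC : Circuit L C) (hxC : x ∈ C) (hCB : C ⊆ insert x B) (hCcard : 3 ≤ C.ncard)
    (w : α → ℝ) (hw : ∀ e, 0 ≤ w e)
    (y : α) (hy : y ∈ C \ {x}) (hymin : ∀ z ∈ C \ {x}, w y ≤ w z) :
    (contract L {x}).IsBase (B \ {y}) ∧ wt w B / 2 ≤ wt w (B \ {y}) := by
  classical
  set X := L.E \ {x} with hXdef
  have hXE : X ⊆ L.E := diff_subset
  have hBX : L.IsBasis B X := (Matroid.isBase_restrict_iff hXE).mp hB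
  have hBE : B ⊆ L.E := hBX.indep.subset_ground
  have hxB : x ∉ B := fun h => (hBX.subset h).2 rfl
  have hBi : L.Indep B := hBX.indep
  have hCE : C ⊆ L.E := hC.1.subset_ground
  have hCxB : C \ {x} ⊆ B := by
    rintro z ⟨hzC, hzx⟩
    rcases hCB hzC with h | h
    · exact absurd h hzx
    · exact h
  have hyB : y ∈ B := hCxB hy
  have hCx_indep : L.Indep (C \ {x}) := hC.2 x hxC
  have hxcl : x ∈ L.closure (C \ {x}) := by
    rw [hCx_indep.mem_closure_iff]
    left
    rw [insert_diff_singleton, insert_eq_of_mem hxC]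
    exact hC.1
  have hxclB : x ∈ L.closure B := L.closure_subset_closure hCxB hxcl
  -- B is a base of L
  have hBbase : L.IsBase B := by
    apply hBi.isBase_of_spanning
    rw [Matroid.spanning_iff_closure_eq hBE]
    refine subset_antisymm (L.closure_subset_ground B) ?_
    intro a ha
    rcases eq_or_ne a x with rfl | hax
    · exact hxclB
    · have haX : a ∈ X := ⟨ha, hax⟩
      have : a ∈ L.closure X := L.subset_closure X hXE haX
      rwa [← hBX.closure_eq_closure] at this
  have hDi : L.Indep (B \ {y}) := hBi.subset diff_subset
  have hDE : B \ {y} ⊆ L.E := diff_subset.trans hBE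
  -- insert x (B \ {y}) is independent
  have hins : L.Indep (insert x (B \ {y})) := by
    by_contra hdep
    have hdep' : L.Dep (insert x (B \ {y})) :=
      ⟨hdep, insert_subset hx hDE⟩
    have hxclD : x ∈ L.closure (B \ {y}) := hDi.mem_closure_iff.mpr (Or.inl hdep')
    have hCy_indep : L.Indep (C \ {y}) := hC.2 y hy.1
    have hycl : y ∈ L.closure (C \ {y}) := by
      rw [hCy_indep.mem_closure_iff]
      left
      rw [insert_diff_singleton, insert_eq_of_mem hy.1]
      exact hC.1
    have hsub : C \ {y} ⊆ L.closure (B \ {y}) := by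
      rintro z ⟨hzC, hzy⟩
      rcases hCB hzC with rfl | hzB
      · exact hxclD
      · exact L.subset_closure (B \ {y}) hDE ⟨hzB, hzy⟩
    have hycl2 : y ∈ L.closure (B \ {y}) :=
      L.closure_subset_closure_of_subset_closure hsub hycl
    rcases hDi.mem_closure_iff.mp hycl2 with h | h
    · rw [insert_diff_singleton, insert_eq_of_mem hyB] at h
      exact h.not_indep hBi
    · exact h.2 rfl
  have hxD : x ∉ B \ {y} := fun h => hxB h.1
  have hbase2 : L.IsBase (insert x (B \ {y})) := hBbase.exchange_isBase_of_indep hxB hins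
  -- the contract base claim
  have hDX : B \ {y} ⊆ X := fun z hz => ⟨hBE hz.1, fun h => hxB (h ▸ hz.1)⟩
  have hXD : X \ (B \ {y}) ⊆ X := diff_subset
  have hEeq : L.E \ (X \ (B \ {y})) = insert x (B \ {y}) := by
    rw [hXdef, diff_diff_right, diff_diff_cancel_left (singleton_subset_iff.mpr hx),
      inter_eq_self_of_subset_right hDE, singleton_union]
  have hXEd : X ⊆ (Matroid.dual L).E := hXE
  have hcontract : (contract L {x}).IsBase (B \ {y}) := by
    show ((Matroid.dual L).restrict X)✶.IsBase (B \ {y})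
    rw [Matroid.dual_isBase_iff (by simpa using hDX), Matroid.restrict_ground_eq,
      Matroid.isBase_restrict_iff hXEd]
    refine Matroid.IsBase.isBasis_of_subset hXEd ?_ hXD
    rw [Matroid.dual_isBase_iff (diff_subset.trans hXE), hEeq]
    exact hbase2
  refine ⟨hcontract, ?_⟩
  -- weight bound
  have hBfin : B.Finite := L.set_finite B hBE
  have hDfin : (B \ {y}).Finite := hBfin.diff
  have hCfin : C.Finite := L.set_finite C hCE
  obtain ⟨z, hzC, hzy⟩ : ∃ z, z ∈ C \ {x} ∧ z ≠ y := by
    apply Set.exists_ne_of_one_lt_ncard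
    have := Set.ncard_diff_singleton_of_mem hxC
    omega
  have hzB : z ∈ B := hCxB hzC
  have hwyz : w y ≤ w z := hymin z hzC
  -- sums
  have hsB : wt w B = ∑ e ∈ hBfin.toFinset, w e :=
    finsum_mem_eq_finite_toFinset_sum _ hBfin
  have hsD : wt w (B \ {y}) = ∑ e ∈ hDfin.toFinset, w e :=
    finsum_mem_eq_finite_toFinset_sum _ hDfin
  have hDfinset : hDfin.toFinset = hBfin.toFinset.erase y := by
    ext a
    simp [Set.Finite.mem_toFinset, Finset.mem_erase, and_comm]
  have hyF : y ∈ hBfin.toFinset := hBfin.mem_toFinset.mpr hyB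
  have hsplit : wt w (B \ {y}) + w y = wt w B := by
    rw [hsB, hsD, hDfinset]
    exact Finset.sum_erase_add _ _ hyF
  have hpair : w y + w z ≤ wt w B := by
    rw [hsB]
    have hsub : ({y, z} : Finset α) ⊆ hBfin.toFinset := by
      intro a ha
      rcases Finset.mem_insert.mp ha with rfl | ha
      · exact hyF
      · rw [Finset.mem_singleton] at ha
        subst ha
        exact hBfin.mem_toFinset.mpr hzB
    calc w y + w z = ∑ e ∈ ({y, z} : Finset α), w e := (Finset.sum_pair hzy.symm).symm
      _ ≤ ∑ e ∈ hBfin.toFinset, w e :=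
        Finset.sum_le_sum_of_subset_of_nonneg hsub (fun i _ _ => hw i)
  have h2y : 2 * w y ≤ wt w B := by linarith
  linarith
end MatroidSecretary
end

section
/- If M is a matroid on ground set E, X ⊆ E, and λ_M(X) = 0, then every independent set of M|X remains independent in M / (E − X); in fact M / (E − X) restricted to X equals M|X. -/
open Set

namespace MatroidSecretary

variable {α : Type*}

open Matroid

lemma rk_eq_ncard_of_base (M : Matroid α) [M.Finite] {D B : Set α}
    (hD : D ⊆ M.E) (hB : (M ↾ D).IsBase B) : rk M D = B.ncard := by
  obtain ⟨hBi, hBD⟩ := Matroid.restrict_indep_iff.mp hB.indep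
  apply le_antisymm
  · refine csSup_le ⟨0, ∅, M.empty_indep, empty_subset _, by simp⟩ ?_
    rintro n ⟨I, hI, hID, rfl⟩
    obtain ⟨B', hB', hIB'⟩ := (hI.indep_restrict_of_subset hID).exists_isBase_superset
    have hfin : B'.Finite := M.ground_finite.subset (hB'.subset_ground.trans hD)
    have := Set.ncard_le_ncard hIB' hfin
    rwa [hB'.ncard_eq_ncard_of_isBase hB] at this
  · apply le_csSup
    · refine ⟨M.E.ncard, ?_⟩
      rintro n ⟨I, hI, hID, rfl⟩
      exact Set.ncard_le_ncard hI.subset_ground M.ground_finite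
    · exact ⟨B, hBi, hBD, rfl⟩

/-- if `λ_M(X) = 0` then every independent set of `M|X` is independent
in `M / (E \ X)`; in fact `(M / (E \ X))|X = M|X`. -/
theorem contract_eq_restrict_of_lambda_zero (M : Matroid α) [M.Finite] (X : Set α)
    (hX : X ⊆ M.E) (hlam : lambda M X = 0) :
    (∀ I, (Matroid.restrict M X).Indep I → (contract M (M.E \ X)).Indep I) ∧
      Matroid.restrict (contract M (M.E \ X)) X = Matroid.restrict M X := by
  set Y : Set α := M.E \ X with hY
  have hYE : Y ⊆ M.E := diff_subset
  have hEfin : M.E.Finite := M.ground_finite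
  have hXfin : X.Finite := hEfin.subset hX
  -- rank additivity from lambda = 0
  have hrk : rk M X + rk M Y = rk M M.E := by
    unfold lambda at hlam; rw [← hY] at hlam; omega
  -- rk of ground set equals cardinality of any base
  have hrkE : ∀ B, M.IsBase B → rk M M.E = B.ncard := by
    intro B hB
    exact rk_eq_ncard_of_base M Subset.rfl (by rwa [Matroid.restrict_ground_eq_self])
  -- any base of M splits into a base of M|X and a base of M|Y
  have hsplit : ∀ B, M.IsBase B → (M ↾ X).IsBase (B ∩ X) ∧ (M ↾ Y).IsBase (B ∩ Y) := by
    intro B hB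
    have hBE : B ⊆ M.E := hB.subset_ground
    have hBfin : B.Finite := hEfin.subset hBE
    obtain ⟨BX, hBX, hsubX⟩ :=
      ((hB.indep.inter_right X).indep_restrict_of_subset inter_subset_right).exists_isBase_superset
    obtain ⟨BY, hBY, hsubY⟩ :=
      ((hB.indep.inter_right Y).indep_restrict_of_subset inter_subset_right).exists_isBase_superset
    have hBXfin : BX.Finite := hEfin.subset ((Matroid.restrict_indep_iff.mp hBX.indep).1.subset_ground)
    have hBYfin : BY.Finite := hEfin.subset ((Matroid.restrict_indep_iff.mp hBY.indep).1.subset_ground)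
    have h1 : (B ∩ X).ncard ≤ rk M X := by
      rw [rk_eq_ncard_of_base M hX hBX]; exact Set.ncard_le_ncard hsubX hBXfin
    have h2 : (B ∩ Y).ncard ≤ rk M Y := by
      rw [rk_eq_ncard_of_base M hYE hBY]; exact Set.ncard_le_ncard hsubY hBYfin
    have hunion : B ∩ X ∪ B ∩ Y = B := by
      rw [← inter_union_distrib_left]
      rw [hY, union_diff_cancel hX]
      exact inter_eq_self_of_subset_left hBE
    have hdisjXY : Disjoint (B ∩ X) (B ∩ Y) := by
      refine Disjoint.mono inter_subset_right inter_subset_right ?_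
      exact disjoint_sdiff_right
    have hcard : (B ∩ X).ncard + (B ∩ Y).ncard = B.ncard := by
      rw [← Set.ncard_union_eq hdisjXY (hBfin.inter_of_left X) (hBfin.inter_of_left Y), hunion]
    have hBcard : B.ncard = rk M M.E := (hrkE B hB).symm
    have h1' : (B ∩ X).ncard = rk M X := by omega
    have h2' : (B ∩ Y).ncard = rk M Y := by omega
    have heqX : B ∩ X = BX := by
      refine Set.eq_of_subset_of_ncard_le hsubX ?_ hBXfin
      rw [h1', rk_eq_ncard_of_base M hX hBX]
    have heqY : B ∩ Y = BY := by
      refine Set.eq_of_subset_of_ncard_le hsubY ?_ hBYfin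
      rw [h2', rk_eq_ncard_of_base M hYE hBY]
    rw [heqX, heqY]; exact ⟨hBX, hBY⟩
  -- every base of M|X extends to a base B of M with B ∩ X = BX
  have hext : ∀ BX, (M ↾ X).IsBase BX → ∃ B, M.IsBase B ∧ B ∩ X = BX := by
    intro BX hBX
    obtain ⟨hi, hs⟩ := Matroid.restrict_indep_iff.mp hBX.indep
    obtain ⟨B, hB, hBXB⟩ := hi.exists_isBase_superset
    refine ⟨B, hB, ?_⟩
    exact (hBX.eq_of_subset_indep
      (Matroid.restrict_indep_iff.mpr ⟨hB.indep.inter_right X, inter_subset_right⟩)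
      (subset_inter hBXB hs)).symm
  -- (a) : complement in X of a base of M|X is a base of M✶|X
  have ha : ∀ BX, (M ↾ X).IsBase BX → (M✶ ↾ X).IsBase (X \ BX) := by
    intro BX hBX
    obtain ⟨B, hB, hBx⟩ := hext BX hBX
    have hBYbase : (M ↾ Y).IsBase (B ∩ Y) := (hsplit B hB).2
    have hBYbasis : M.IsBasis (B ∩ Y) Y := (Matroid.isBase_restrict_iff hYE).mp hBYbase
    have hdualbasis := hB.compl_inter_isBasis_of_inter_isBasis hBYbasis
    have hEY : M.E \ Y = X := by rw [hY, diff_diff_cancel_left hX]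
    rw [hEY] at hdualbasis
    have hset : (M.E \ B) ∩ X = X \ BX := by
      rw [← hBx]
      ext x
      simp only [mem_inter_iff, mem_diff]
      constructor
      · rintro ⟨⟨-, hxB⟩, hxX⟩; exact ⟨hxX, fun h => hxB h.1⟩
      · rintro ⟨hxX, hxB⟩; exact ⟨⟨hX hxX, fun h => hxB ⟨h, hxX⟩⟩, hxX⟩
    rw [hset] at hdualbasis
    exact hdualbasis.isBase_restrict
  -- all bases of M✶|X have cardinality X.ncard - rk M X
  have hcardN : ∀ B', (M✶ ↾ X).IsBase B' → B'.ncard = X.ncard - rk M X := by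
    intro B' hB'
    obtain ⟨BX0, hBX0⟩ := (M ↾ X).exists_isBase
    have h0 := ha BX0 hBX0
    rw [hB'.ncard_eq_ncard_of_isBase h0]
    have hBX0fin : BX0.Finite := hEfin.subset ((Matroid.restrict_indep_iff.mp hBX0.indep).1.subset_ground)
    have hBX0X : BX0 ⊆ X := (Matroid.restrict_indep_iff.mp hBX0.indep).2
    rw [Set.ncard_diff hBX0X hBX0fin, rk_eq_ncard_of_base M hX hBX0]
  -- (b) : complement in X of a base of M✶|X is M-independent
  have hb : ∀ B', (M✶ ↾ X).IsBase B' → M.Indep (X \ B') := by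
    intro B' hB'
    obtain ⟨hB'i, hB'X⟩ := Matroid.restrict_indep_iff.mp hB'.indep
    obtain ⟨B₀, hB₀, hB'B₀⟩ := hB'i.exists_isBase_superset
    have hB₂ : M.IsBase (M.E \ B₀) := hB₀.compl_isBase_of_dual
    have hB₂X : (M ↾ X).IsBase ((M.E \ B₀) ∩ X) := (hsplit _ hB₂).1
    have hsub : (M.E \ B₀) ∩ X ⊆ X \ B' := by
      rintro x ⟨⟨-, hxB₀⟩, hxX⟩
      exact ⟨hxX, fun h => hxB₀ (hB'B₀ h)⟩
    have hle : (X \ B').ncard ≤ ((M.E \ B₀) ∩ X).ncard := by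
      rw [Set.ncard_diff hB'X (hXfin.subset hB'X), hcardN B' hB',
        rk_eq_ncard_of_base M hX hB₂X]
      have hrkle : rk M X ≤ X.ncard := by
        rw [rk_eq_ncard_of_base M hX hB₂X]
        exact Set.ncard_le_ncard ((Matroid.restrict_indep_iff.mp hB₂X.indep).2) hXfin
      omega
    have heq : (M.E \ B₀) ∩ X = X \ B' :=
      Set.eq_of_subset_of_ncard_le hsub hle (hXfin.diff (t := B'))
    rw [← heq]
    exact (Matroid.restrict_indep_iff.mp hB₂X.indep).1
  -- the key independence equivalence
  have hkey : ∀ I, I ⊆ X → (((M✶ ↾ X)✶).Indep I ↔ M.Indep I) := by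
    intro I hIX
    constructor
    · intro hI
      obtain ⟨-, B', hB', hdisj⟩ := Matroid.dual_indep_iff_exists'.mp hI
      have : I ⊆ X \ B' := subset_diff.mpr ⟨hIX, hdisj⟩
      exact (hb B' hB').subset this
    · intro hI
      obtain ⟨BX, hBX, hIBX⟩ := (hI.indep_restrict_of_subset hIX).exists_isBase_superset
      refine Matroid.dual_indep_iff_exists'.mpr ⟨hIX, X \ BX, ha BX hBX, ?_⟩
      exact disjoint_sdiff_right.mono_left hIBX
  -- identify the contraction
  have hc : contract M (M.E \ X) = (M✶ ↾ X)✶ := by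
    unfold contract
    rw [diff_diff_cancel_left hX]
  have hmain : Matroid.restrict (contract M (M.E \ X)) X = Matroid.restrict M X := by
    rw [hc]
    refine Matroid.ext_indep rfl ?_
    intro I hIX
    simp only [Matroid.restrict_ground_eq] at hIX
    rw [Matroid.restrict_indep_iff, Matroid.restrict_indep_iff, hkey I hIX]
  refine ⟨?_, hmain⟩
  intro I hI
  obtain ⟨hIi, hIX⟩ := Matroid.restrict_indep_iff.mp hI
  rw [hc]
  exact (hkey I hIX).mpr hIi
end MatroidSecretary
end

section
/- Let M be a matroid with tree-decomposition (T, {X_v}) and let ℓ be a leaf of T adjacent to u. Let X'_ℓ = X_ℓ − cl_M(X_u) and X'_u = X_u ∪ (X_ℓ ∩ cl_M(X_u)). Then λ_M(X'_ℓ) ≤ λ_M(X_ℓ). -/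
open Set

namespace MatroidSecretary

variable {α : Type*}

lemma rk_le_of_subset_closure (M : Matroid α) [M.Finite] {X Y : Set α}
    (h : X ⊆ M.closure Y) : rk M X ≤ rk M Y := by
  unfold rk
  refine csSup_le ⟨0, ∅, M.empty_indep, empty_subset _, Set.ncard_empty α⟩ ?_
  rintro n ⟨I, hI, hIX, rfl⟩
  obtain ⟨J, hJ⟩ := M.exists_isBasis' Y
  obtain ⟨I', hI'b, hII'⟩ := hI.subset_isBasis_of_subset (hIX.trans h)
    (M.closure_subset_ground Y)
  have hI'fin : I'.Finite := M.ground_finite.subset hI'b.indep.subset_ground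
  have h1 : I.ncard ≤ I'.ncard := Set.ncard_le_ncard hII' hI'fin
  have h2 : I'.ncard = J.ncard := by
    have := hI'b.encard_eq_encard hJ.isBasis_closure_right
    simp only [Set.ncard_def, this]
  refine h1.trans (h2.le.trans ?_)
  apply le_csSup
  · refine ⟨M.E.ncard, ?_⟩
    rintro m ⟨K, hK, _, rfl⟩
    exact Set.ncard_le_ncard hK.subset_ground M.ground_finite
  · exact ⟨J, hJ.indep, hJ.subset, rfl⟩

/-- moving the elements of `X_ℓ ∩ cl_M(X_u)` out of a leaf part does not
increase the connectivity: `λ_M(X_ℓ \ cl_M(X_u)) ≤ λ_M(X_ℓ)`. -/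
theorem lambda_diff_closure_le (M : Matroid α) [M.Finite] (Xl Xu : Set α)
    (hXl : Xl ⊆ M.E) (hXu : Xu ⊆ M.E) (hdj : Disjoint Xl Xu) :
    lambda M (Xl \ M.closure Xu) ≤ lambda M Xl := by
  have h1 : rk M (Xl \ M.closure Xu) ≤ rk M Xl :=
    rk_le_of_subset_closure M (fun x hx => M.subset_closure Xl hXl hx.1)
  have h2 : rk M (M.E \ (Xl \ M.closure Xu)) ≤ rk M (M.E \ Xl) := by
    apply rk_le_of_subset_closure M
    rintro x ⟨hxE, hx⟩
    by_cases hxl : x ∈ Xl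
    · have hxcl : x ∈ M.closure Xu := by
        by_contra h; exact hx ⟨hxl, h⟩
      have hsub : Xu ⊆ M.E \ Xl := fun y hy => ⟨hXu hy, disjoint_right.mp hdj hy⟩
      exact M.closure_subset_closure hsub hxcl
    · exact M.subset_closure _ diff_subset ⟨hxE, hxl⟩
  simp only [lambda]
  linarith
end MatroidSecretary
end
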